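/- arXiv:1310.5294 — 5 statements merged into one kernel-verified Lean document; each statement's English description precedes it below -/
import Mathlib

section
/- For a finite poset P, the composition of toggles along any linear extension x₁, x₂, …, x_m of P, namely τ_{x₁} ∘ τ_{x₂} ∘ ⋯ ∘ τ_{x_m}, equals the rowmotion map ρ = α₃ ∘ α₂ ∘ α₁, where α₁ takes complements, α₂ takes minimal elements, and α₃ takes downward saturation. -/
open scoped symmDiff
open Classical

/-- The combinatorial toggle at `x` on subsets of a poset. -/

noncomputable def toggle {P : Type*} [PartialOrder P] (x : P) (I : Set P) : Set P :=
  if IsLowerSet (I ∆ {x}) then I ∆ {x} else I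

/-- Rowmotion: the downward saturation of the set of minimal elements
of the complement. -/
def rowmotion {P : Type*} [PartialOrder P] (I : Set P) : Set P :=
  {y | ∃ x, (x ∈ Iᶜ ∧ ∀ z ∈ Iᶜ, z ≤ x → z = x) ∧ y ≤ x}

lemma rowmotion_lower {P : Type*} [PartialOrder P] (I : Set P) :
    IsLowerSet (rowmotion I) := by
  rintro v u huv ⟨x, hx, hvx⟩
  exact ⟨x, hx, huv.trans hvx⟩

lemma toggle_lower {P : Type*} [PartialOrder P] (x : P) (J : Set P)
    (hJ : IsLowerSet J) : IsLowerSet (toggle x J) := by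
  unfold toggle
  split
  · assumption
  · exact hJ

lemma foldr_toggle_lower {P : Type*} [PartialOrder P] (l : List P) (I : Set P)
    (hI : IsLowerSet I) : IsLowerSet (l.foldr toggle I) := by
  induction l with
  | nil => exact hI
  | cons a t ih => exact toggle_lower a _ ih

/-- In a finite poset, below any element of a set there is a minimal element. -/
lemma exists_minimal_le {P : Type*} [PartialOrder P] [Fintype P] (S : Set P) (a : P)
    (ha : a ∈ S) : ∃ m, m ∈ S ∧ (∀ z ∈ S, z ≤ m → z = m) ∧ m ≤ a := by
  have hwf : WellFoundedLT P := Finite.to_wellFoundedLT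
  obtain ⟨m, hm, hmin⟩ := hwf.wf.has_min {z | z ∈ S ∧ z ≤ a} ⟨a, ha, le_refl a⟩
  refine ⟨m, hm.1, ?_, hm.2⟩
  intro z hz hzm
  by_contra hne
  exact hmin z ⟨hz, hzm.trans hm.2⟩ (lt_of_le_of_ne hzm hne)

lemma key_fold {P : Type*} [PartialOrder P] [Fintype P] (I : Set P) (hI : IsLowerSet I) :
    ∀ (s : List P), s.Nodup → s.Pairwise (fun a b => ¬ b < a) →
      (∀ a ∈ s, ∀ c, a < c → c ∈ s) →
      s.foldr toggle I = (I \ {x | x ∈ s}) ∪ (rowmotion I ∩ {x | x ∈ s}) := by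
  intro s
  induction s with
  | nil =>
    intro _ _ _
    simp
  | cons a t ih =>
    intro hnd hpw hcl
    have hand : a ∉ t := (List.nodup_cons.mp hnd).1
    have hndt : t.Nodup := (List.nodup_cons.mp hnd).2
    have hpa : ∀ b ∈ t, ¬ b < a := fun b hb => List.rel_of_pairwise_cons hpw hb
    have hpwt : t.Pairwise (fun a b => ¬ b < a) := hpw.of_cons
    have hclt : ∀ b ∈ t, ∀ c, b < c → c ∈ t := by
      intro b hb c hbc
      have := hcl b (List.mem_cons_of_mem a hb) c hbc
      rcases List.mem_cons.mp this with h | h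
      · exact absurd (h ▸ hbc) (hpa b hb)
      · exact h
    set R := rowmotion I with hR
    set J := t.foldr toggle I with hJ
    have hJeq : J = (I \ {x | x ∈ t}) ∪ (R ∩ {x | x ∈ t}) := ih hndt hpwt hclt
    have hJlow : IsLowerSet J := foldr_toggle_lower t I hI
    -- membership characterizations
    have hmemJ : ∀ x, x ∈ J ↔ (x ∈ I ∧ x ∉ t) ∨ (x ∈ R ∧ x ∈ t) := by
      intro x; rw [hJeq]; simp [Set.mem_diff]
    have haJ : a ∈ J ↔ a ∈ I := by
      rw [hmemJ]; simp [hand]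
    have hup : ∀ c, a < c → c ∈ t := by
      intro c hc
      rcases List.mem_cons.mp (hcl a List.mem_cons_self c hc) with h | h
      · exact absurd (h ▸ hc) (lt_irrefl a)
      · exact h
    have habove : ∀ c, a < c → (c ∈ J ↔ c ∈ R) := by
      intro c hc
      have hct := hup c hc
      rw [hmemJ]; simp [hct]
    have hbelow : ∀ b, b < a → (b ∈ J ↔ b ∈ I) := by
      intro b hb
      have hbt : b ∉ t := fun h => hpa b h hb
      rw [hmemJ]; simp [hbt]
    -- the target set
    have hT : {x : P | x ∈ a :: t} = {x | x = a ∨ x ∈ t} := by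
      ext x; simp
    set G := (I \ {x : P | x ∈ a :: t}) ∪ (R ∩ {x : P | x ∈ a :: t}) with hG
    have hmemG : ∀ x, x ∈ G ↔ (x ∈ I ∧ ¬(x = a ∨ x ∈ t)) ∨ (x ∈ R ∧ (x = a ∨ x ∈ t)) := by
      intro x; rw [hG, hT]; simp [Set.mem_diff]
    have hRlow : IsLowerSet R := rowmotion_lower I
    -- two equality helpers
    have heqJ : (a ∈ I ↔ a ∈ R) → J = G := by
      intro hiff
      ext x
      rw [hmemJ, hmemG]
      by_cases hxa : x = a
      · subst hxa
        simp [hand]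
        tauto
      · simp [hxa]
    have heqFlip : (a ∈ I ↔ a ∉ R) → J ∆ {a} = G := by
      intro hiff
      ext x
      rw [Set.mem_symmDiff, hmemG]
      by_cases hxa : x = a
      · subst hxa
        simp only [haJ, Set.mem_singleton_iff]
        simp [hand]
        tauto
      · rw [hmemJ]
        simp [hxa, Set.mem_singleton_iff]
    -- now the case analysis
    show toggle a J = G
    by_cases hIa : a ∈ I <;> by_cases hRa : a ∈ R
    · -- a ∈ I, a ∈ R : toggle does nothing
      have hnl : ¬ IsLowerSet (J ∆ {a}) := by
        intro hls
        obtain ⟨x, hx, hax⟩ := hRa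
        have hne : a ≠ x := by rintro rfl; exact hx.1 hIa
        have hax' : a < x := lt_of_le_of_ne hax hne
        have hxJ : x ∈ J := (habove x hax').mpr ⟨x, hx, le_refl x⟩
        have hxS : x ∈ J ∆ {a} := by
          rw [Set.mem_symmDiff]
          exact Or.inl ⟨hxJ, fun h => hne (Set.mem_singleton_iff.mp h).symm⟩
        have haS : a ∈ J ∆ {a} := hls hax hxS
        rw [Set.mem_symmDiff] at haS
        rcases haS with ⟨_, h⟩ | ⟨_, h⟩
        · exact h rfl
        · exact h (haJ.mpr hIa)
      rw [toggle, if_neg hnl]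
      exact heqJ ⟨fun _ => hRa, fun _ => hIa⟩
    · -- a ∈ I, a ∉ R : toggle removes a
      have haJ' : a ∈ J := haJ.mpr hIa
      have hls : IsLowerSet (J ∆ {a}) := by
        intro v u huv hv
        rw [Set.mem_symmDiff] at hv ⊢
        rcases hv with ⟨hvJ, hva⟩ | ⟨hva, hvJ⟩
        · have huJ : u ∈ J := hJlow huv hvJ
          refine Or.inl ⟨huJ, fun h => ?_⟩
          have hua : u = a := Set.mem_singleton_iff.mp h
          subst hua
          have hne : u ≠ v := fun h => hva (Set.mem_singleton_iff.mpr h.symm)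
          have hvR : v ∈ R := (habove v (lt_of_le_of_ne huv hne)).mp hvJ
          exact absurd (hRlow huv hvR) hRa
        · exact absurd (Set.mem_singleton_iff.mp hva ▸ haJ') hvJ
      rw [toggle, if_pos hls]
      exact heqFlip ⟨fun _ => hRa, fun _ => hIa⟩
    · -- a ∉ I, a ∈ R : toggle adds a
      have haJ' : a ∉ J := fun h => hIa (haJ.mp h)
      have hamin : ∀ z, z ∉ I → z ≤ a → z = a := by
        obtain ⟨x, hx, hax⟩ := hRa
        have hae : a = x := hx.2 a hIa hax
        subst hae
        intro z hz hza
        exact hx.2 z hz hza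
      have hls : IsLowerSet (J ∆ {a}) := by
        intro v u huv hv
        rw [Set.mem_symmDiff] at hv ⊢
        rcases hv with ⟨hvJ, hva⟩ | ⟨hva, hvJ⟩
        · exact Or.inl ⟨hJlow huv hvJ, fun h =>
            haJ' ((Set.mem_singleton_iff.mp h) ▸ hJlow huv hvJ)⟩
        · have hva' : v = a := Set.mem_singleton_iff.mp hva
          subst hva'
          by_cases hua : u = v
          · exact Or.inr ⟨hua ▸ rfl, hua ▸ hvJ⟩
          · have huI : u ∈ I := by
              by_contra huI
              exact hua (hamin u huI huv)
            have huJ : u ∈ J := (hbelow u (lt_of_le_of_ne huv hua)).mpr huI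
            exact Or.inl ⟨huJ, fun h => hua (Set.mem_singleton_iff.mp h)⟩
      rw [toggle, if_pos hls]
      exact heqFlip ⟨fun h => absurd h hIa, fun h => absurd hRa h⟩
    · -- a ∉ I, a ∉ R : toggle does nothing
      have haJ' : a ∉ J := fun h => hIa (haJ.mp h)
      have hnl : ¬ IsLowerSet (J ∆ {a}) := by
        intro hls
        obtain ⟨m, hm, hmin, hma⟩ := exists_minimal_le Iᶜ a (Set.mem_compl hIa)
        have hmR : m ∈ R := ⟨m, ⟨hm, hmin⟩, le_refl m⟩
        have hne : m ≠ a := by rintro rfl; exact hRa hmR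
        have hmI : m ∉ I := hm
        have hmJ : m ∉ J := fun h => hmI ((hbelow m (lt_of_le_of_ne hma hne)).mp h)
        have haS : a ∈ J ∆ {a} := by
          rw [Set.mem_symmDiff]; exact Or.inr ⟨rfl, haJ'⟩
        have hmS : m ∈ J ∆ {a} := hls hma haS
        rw [Set.mem_symmDiff] at hmS
        rcases hmS with ⟨h, _⟩ | ⟨h, _⟩
        · exact hmJ h
        · exact hne (Set.mem_singleton_iff.mp h)
      rw [toggle, if_neg hnl]
      exact heqJ ⟨fun h => absurd h hIa, fun h => absurd h hRa⟩

theorem toggle_linear_extension_eq_rowmotion {P : Type*} [PartialOrder P] [Fintype P]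
    (l : List P) (hnd : l.Nodup) (hmem : ∀ x : P, x ∈ l)
    (hle : l.Pairwise (fun a b => ¬ b < a))
    (I : Set P) (hI : IsLowerSet I) :
    l.foldr toggle I = rowmotion I := by
  have := key_fold I hI l hnd hle (fun a _ c _ => hmem c)
  rw [this]
  have : {x : P | x ∈ l} = Set.univ := by
    ext x; simp [hmem x]
  rw [this]
  simp
end

section
/- Each piecewise-linear toggle φ_x on ℝ^P preserves the quantity min{f(y) − f(w) : w, y ∈ P̂, w ⋖ y}, where f(0̂)=0 and f(1̂)=1. -/
variable {P : Type*} [PartialOrder P]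

/-- The augmented poset `P̂ = P ∪ {0̂, 1̂}`. -/
abbrev Phat (P : Type*) := WithBot (WithTop P)

/-- The embedding of `P` into `P̂`. -/
def toPhat (x : P) : Phat P := ((x : WithTop P) : Phat P)

/-- Extension of `f : P → ℝ` to `P̂` with `f(0̂) = 0` and `f(1̂) = 1`. -/
def fhat (f : P → ℝ) : Phat P → ℝ :=
  WithBot.recBotCoe 0 (WithTop.recTopCoe 1 f)

/-- `L`: the maximum of `f` over elements of `P̂` covered by `x`. -/
noncomputable def Ltog (f : P → ℝ) (x : P) : ℝ :=
  sSup (fhat f '' {y | y ⋖ toPhat x})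

/-- `R`: the minimum of `f` over elements of `P̂` covering `x`. -/
noncomputable def Rtog (f : P → ℝ) (x : P) : ℝ :=
  sInf (fhat f '' {y | toPhat x ⋖ y})

open Classical in
/-- The piecewise-linear toggle at `x`. -/
noncomputable def plToggle (x : P) (f : P → ℝ) : P → ℝ :=
  Function.update f x (Ltog f x + Rtog f x - f x)

/-- The minimum gap `min {f(y) − f(w) : w ⋖ y in P̂}`. -/
noncomputable def minGap (f : P → ℝ) : ℝ :=
  sInf ((fun p : Phat P × Phat P => fhat f p.2 - fhat f p.1) '' {p | p.1 ⋖ p.2})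

noncomputable instance PhatFintype [Fintype P] : Fintype (Phat P) := by
  unfold Phat WithBot WithTop; infer_instance

omit [PartialOrder P] in
lemma fhat_toPhat (f : P → ℝ) (z : P) : fhat f (toPhat z) = f z := rfl

open Classical in
lemma fhat_plToggle (x : P) (f : P → ℝ) (w : Phat P) :
    fhat (plToggle x f) w =
      if w = toPhat x then Ltog f x + Rtog f x - f x else fhat f w := by
  induction w using WithBot.recBotCoe with
  | bot => simp [fhat, toPhat]
  | coe w =>
    induction w using WithTop.recTopCoe with
    | top => rfl
    | coe z =>
      by_cases h : z = x
      · subst h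
        simp [fhat, toPhat, plToggle]
      · simp [fhat, toPhat, plToggle, Function.update_of_ne h, h]

section Fin
variable [Fintype P]

lemma exists_covby_below (x : P) : ∃ w : Phat P, w ⋖ toPhat x := by
  have h : (⊥ : Phat P) < toPhat x := by
    simp [toPhat, bot_lt_iff_ne_bot]
  obtain ⟨w, -, hw⟩ := exists_le_covBy_of_lt h
  exact ⟨w, hw⟩

lemma exists_covby_above (x : P) : ∃ y : Phat P, toPhat x ⋖ y := by
  have h : toPhat x < (((⊤ : WithTop P) : Phat P)) :=
    WithBot.coe_lt_coe.mpr (WithTop.coe_lt_top x)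
  obtain ⟨y, hy, -⟩ := exists_covBy_le_of_lt h
  exact ⟨y, hy⟩

lemma exists_L_attained (f : P → ℝ) (x : P) :
    ∃ w : Phat P, w ⋖ toPhat x ∧ fhat f w = Ltog f x := by
  obtain ⟨w0, hw0⟩ := exists_covby_below x
  have hne : (fhat f '' {y | y ⋖ toPhat x}).Nonempty := ⟨_, ⟨w0, hw0, rfl⟩⟩
  obtain ⟨w, hw, hweq⟩ := hne.csSup_mem (Set.toFinite _)
  exact ⟨w, hw, hweq⟩

lemma exists_R_attained (f : P → ℝ) (x : P) :
    ∃ y : Phat P, toPhat x ⋖ y ∧ fhat f y = Rtog f x := by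
  obtain ⟨y0, hy0⟩ := exists_covby_above x
  have hne : (fhat f '' {y | toPhat x ⋖ y}).Nonempty := ⟨_, ⟨y0, hy0, rfl⟩⟩
  obtain ⟨y, hy, hyeq⟩ := hne.csInf_mem (Set.toFinite _)
  exact ⟨y, hy, hyeq⟩

lemma le_Ltog (f : P → ℝ) {x : P} {w : Phat P} (h : w ⋖ toPhat x) :
    fhat f w ≤ Ltog f x :=
  le_csSup (Set.toFinite _).bddAbove ⟨w, h, rfl⟩

lemma Rtog_le (f : P → ℝ) {x : P} {y : Phat P} (h : toPhat x ⋖ y) :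
    Rtog f x ≤ fhat f y :=
  csInf_le (Set.toFinite _).bddBelow ⟨y, h, rfl⟩

omit [PartialOrder P] [Fintype P] in
lemma csInf_le_csInf_gap (S T : Set ℝ) (hS : S.Finite) (hT : T.Finite) (hTne : T.Nonempty)
    (h : ∀ t ∈ T, ∃ s ∈ S, s ≤ t) : sInf S ≤ sInf T := by
  obtain ⟨s, hsS, hst⟩ := h _ (hTne.csInf_mem hT)
  exact le_trans (csInf_le hS.bddBelow hsS) hst

end Fin

theorem plToggle_preserves_minGap [Fintype P] (x : P) (f : P → ℝ) :
    minGap (plToggle x f) = minGap f := by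
  classical
  set g := plToggle x f with hg
  obtain ⟨wL, hwL, hwLval⟩ := exists_L_attained f x
  obtain ⟨yR, hyR, hyRval⟩ := exists_R_attained f x
  have hwLne : wL ≠ toPhat x := hwL.lt.ne
  have hyRne : yR ≠ toPhat x := hyR.lt.ne'
  have hgx : fhat g (toPhat x) = Ltog f x + Rtog f x - f x := by
    rw [hg, fhat_plToggle, if_pos rfl]
  have hgother : ∀ w : Phat P, w ≠ toPhat x → fhat g w = fhat f w := by
    intro w hw; rw [hg, fhat_plToggle, if_neg hw]
  have hCne : {p : Phat P × Phat P | p.1 ⋖ p.2}.Nonempty := ⟨(wL, toPhat x), hwL⟩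
  have hCfin : {p : Phat P × Phat P | p.1 ⋖ p.2}.Finite := Set.toFinite _
  unfold minGap
  apply le_antisymm
  · apply csInf_le_csInf_gap _ _ (hCfin.image _) (hCfin.image _) (hCne.image _)
    rintro t ⟨⟨a, b⟩, (hab : a ⋖ b), rfl⟩
    by_cases hb : b = toPhat x
    · subst hb
      refine ⟨_, ⟨(toPhat x, yR), hyR, rfl⟩, ?_⟩
      have ha : a ≠ toPhat x := hab.lt.ne
      have h1 := le_Ltog f hab
      simp only [hgother yR hyRne, hgx, hyRval, fhat_toPhat]
      linarith
    · by_cases ha : a = toPhat x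
      · subst ha
        refine ⟨_, ⟨(wL, toPhat x), hwL, rfl⟩, ?_⟩
        have h1 := Rtog_le f hab
        simp only [hgother wL hwLne, hgx, hwLval, fhat_toPhat]
        linarith
      · exact ⟨_, ⟨(a, b), hab, rfl⟩,
          by simp only [hgother a ha, hgother b hb]; exact le_rfl⟩
  · apply csInf_le_csInf_gap _ _ (hCfin.image _) (hCfin.image _) (hCne.image _)
    rintro t ⟨⟨a, b⟩, (hab : a ⋖ b), rfl⟩
    by_cases hb : b = toPhat x
    · subst hb
      refine ⟨_, ⟨(toPhat x, yR), hyR, rfl⟩, ?_⟩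
      have ha : a ≠ toPhat x := hab.lt.ne
      have h1 := le_Ltog f hab
      simp only [hgother a ha, hgx, hyRval, fhat_toPhat]
      linarith
    · by_cases ha : a = toPhat x
      · subst ha
        refine ⟨_, ⟨(wL, toPhat x), hwL, rfl⟩, ?_⟩
        have h1 := Rtog_le f hab
        simp only [hgother b hb, hgx, hwLval, fhat_toPhat]
        linarith
      · exact ⟨_, ⟨(a, b), hab, rfl⟩,
          by simp only [hgother a ha, hgother b hb]; exact le_rfl⟩
end

section
/- For a finite poset P and x ∈ P, the piecewise-linear toggle φ_x maps the order polytope O(P) into itself. -/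
variable {P : Type*} [PartialOrder P]

/-- The order polytope: order-preserving maps `P → [0,1]`. -/
def orderPolytope (P : Type*) [PartialOrder P] : Set (P → ℝ) :=
  {f | (∀ z, f z ∈ Set.Icc (0:ℝ) 1) ∧ Monotone f}

lemma fhat_mem_Icc (f : P → ℝ) (h : ∀ z, f z ∈ Set.Icc (0:ℝ) 1) (y : Phat P) :
    fhat f y ∈ Set.Icc (0:ℝ) 1 := by
  induction y using WithBot.recBotCoe with
  | bot => exact show (0:ℝ) ∈ Set.Icc (0:ℝ) 1 by norm_num
  | coe a =>
    induction a using WithTop.recTopCoe with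
    | top => exact show (1:ℝ) ∈ Set.Icc (0:ℝ) 1 by norm_num
    | coe w => exact h w

lemma fhat_mono (f : P → ℝ) (h : ∀ z, f z ∈ Set.Icc (0:ℝ) 1) (hm : Monotone f) :
    Monotone (fhat f) := by
  intro u v huv
  induction u using WithBot.recBotCoe with
  | bot => exact le_trans (le_of_eq rfl) (fhat_mem_Icc f h v).1
  | coe a =>
    induction v using WithBot.recBotCoe with
    | bot => exact absurd huv (by simp)
    | coe b =>
      rw [WithBot.coe_le_coe] at huv
      induction b using WithTop.recTopCoe with
      | top => exact le_trans (fhat_mem_Icc f h _).2 (le_of_eq rfl)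
      | coe w =>
        induction a using WithTop.recTopCoe with
        | top => exact absurd huv (by simp)
        | coe u' =>
          rw [WithTop.coe_le_coe] at huv
          exact hm huv

theorem plToggle_mem_orderPolytope [Fintype P] (x : P) (f : P → ℝ)
    (hf : f ∈ orderPolytope P) :
    plToggle x f ∈ orderPolytope P := by
  classical
  obtain ⟨hIcc, hmono⟩ := hf
  haveI : Fintype (WithTop P) := inferInstanceAs (Fintype (Option P))
  haveI : Fintype (Phat P) := inferInstanceAs (Fintype (Option (WithTop P)))
  haveI : LocallyFiniteOrder (Phat P) := Fintype.toLocallyFiniteOrder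
  have hfm := fhat_mono f hIcc hmono
  -- nonemptiness of the cover sets
  obtain ⟨c₀, hc₀le, hc₀⟩ :=
    exists_le_covBy_of_lt (show (⊥ : Phat P) < toPhat x from WithBot.bot_lt_coe _)
  obtain ⟨c₁, hc₁, hc₁le⟩ :=
    exists_covBy_le_of_lt (show toPhat x < (⊤ : Phat P) from
      lt_of_le_of_ne le_top (by simp [toPhat]))
  have hSne : ((fhat f '' {y | y ⋖ toPhat x})).Nonempty := ⟨_, ⟨c₀, hc₀, rfl⟩⟩
  have hTne : ((fhat f '' {y | toPhat x ⋖ y})).Nonempty := ⟨_, ⟨c₁, hc₁, rfl⟩⟩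
  have hSfin : (fhat f '' {y | y ⋖ toPhat x}).Finite := (Set.toFinite _).image _
  have hTfin : (fhat f '' {y | toPhat x ⋖ y}).Finite := (Set.toFinite _).image _
  have hfx : fhat f (toPhat x) = f x := rfl
  -- bounds
  have hLle : Ltog f x ≤ f x := by
    refine csSup_le hSne ?_
    rintro r ⟨y, hy, rfl⟩
    exact hfx ▸ hfm hy.le
  have hRge : f x ≤ Rtog f x := by
    refine le_csInf hTne ?_
    rintro r ⟨y, hy, rfl⟩
    exact hfx ▸ hfm hy.le
  have hL0 : (0:ℝ) ≤ Ltog f x :=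
    le_trans (fhat_mem_Icc f hIcc c₀).1 (le_csSup hSfin.bddAbove ⟨c₀, hc₀, rfl⟩)
  have hR1 : Rtog f x ≤ 1 :=
    le_trans (csInf_le hTfin.bddBelow ⟨c₁, hc₁, rfl⟩) (fhat_mem_Icc f hIcc c₁).2
  have hvL : Ltog f x ≤ Ltog f x + Rtog f x - f x := by linarith
  have hvR : Ltog f x + Rtog f x - f x ≤ Rtog f x := by linarith
  constructor
  · intro z
    by_cases hz : z = x
    · subst hz
      simp only [plToggle, Function.update_self]
      exact ⟨le_trans hL0 hvL, le_trans hvR hR1⟩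
    · simpa only [plToggle, Function.update_of_ne hz] using hIcc z
  · intro a b hab
    by_cases ha : a = x <;> by_cases hb : b = x
    · rw [ha, hb]
    · rw [ha]
      rw [ha] at hab
      have hxb : x < b := lt_of_le_of_ne hab (Ne.symm hb)
      obtain ⟨c, hc, hcle⟩ := exists_covBy_le_of_lt
        (show toPhat x < toPhat b from WithBot.coe_lt_coe.mpr (WithTop.coe_lt_coe.mpr hxb))
      have h1 : Rtog f x ≤ fhat f c := csInf_le hTfin.bddBelow ⟨c, hc, rfl⟩
      have h2 : fhat f c ≤ f b := by
        have := hfm hcle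
        rwa [show fhat f (toPhat b) = f b from rfl] at this
      simp only [plToggle, Function.update_self, Function.update_of_ne hb]
      linarith
    · rw [hb]
      rw [hb] at hab
      have hax : a < x := lt_of_le_of_ne hab ha
      obtain ⟨c, hcle, hc⟩ := exists_le_covBy_of_lt
        (show toPhat a < toPhat x from WithBot.coe_lt_coe.mpr (WithTop.coe_lt_coe.mpr hax))
      have h1 : fhat f c ≤ Ltog f x := le_csSup hSfin.bddAbove ⟨c, hc, rfl⟩
      have h2 : f a ≤ fhat f c := by
        have := hfm hcle
        rwa [show fhat f (toPhat a) = f a from rfl] at this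
      simp only [plToggle, Function.update_self, Function.update_of_ne ha]
      linarith
    · simpa only [plToggle, Function.update_of_ne ha, Function.update_of_ne hb] using hmono hab
end

section
/- Each birational toggle φ_x on (ℝ⁺)^P preserves the quantity Σ{f(w)/f(y) : w, y ∈ P̂, w ⋖ y}, with f(0̂) = f(1̂) = 1. -/
open Classical

variable {P : Type*} [PartialOrder P]

/-- Extension of `f : P → ℝ` to `P̂` with `f(0̂) = f(1̂) = 1`. -/
def bfhat (f : P → ℝ) : Phat P → ℝ :=
  WithBot.recBotCoe 1 (WithTop.recTopCoe 1 f)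

instance [Fintype P] : Fintype (Phat P) :=
  inferInstanceAs (Fintype (Option (Option P)))

/-- `L`: the ordinary sum of `f` over elements of `P̂` covered by `x`. -/
noncomputable def bL [Fintype P] (f : P → ℝ) (x : P) : ℝ :=
  ∑ y ∈ Finset.univ.filter (fun y : Phat P => y ⋖ toPhat x), bfhat f y

/-- `R`: the parallel sum of `f` over elements of `P̂` covering `x`
(for positive reals, the inverse of the sum of the inverses). -/
noncomputable def bR [Fintype P] (f : P → ℝ) (x : P) : ℝ :=
  (∑ y ∈ Finset.univ.filter (fun y : Phat P => toPhat x ⋖ y), (bfhat f y)⁻¹)⁻¹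

/-- The birational toggle at `x`. -/
noncomputable def bToggle [Fintype P] (x : P) (f : P → ℝ) : P → ℝ :=
  Function.update f x (bL f x * bR f x / f x)

/-- The quantity `Σ {f(w)/f(y) : w ⋖ y in P̂}`. -/
noncomputable def coverRatioSum [Fintype P] (f : P → ℝ) : ℝ :=
  ∑ p ∈ Finset.univ.filter (fun p : Phat P × Phat P => p.1 ⋖ p.2),
    bfhat f p.1 / bfhat f p.2

lemma bfhat_pos {f : P → ℝ} (hf : ∀ z, 0 < f z) : ∀ y, 0 < bfhat f y := by
  intro y
  induction y using WithBot.recBotCoe with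
  | bot => norm_num [bfhat]
  | coe z =>
    induction z using WithTop.recTopCoe with
    | top => exact one_pos
    | coe w => simpa [bfhat] using hf w

lemma bfhat_toPhat (f : P → ℝ) (x : P) : bfhat f (toPhat x) = f x := by
  simp [bfhat, toPhat]

lemma bfhat_toggle [Fintype P] (x : P) (f : P → ℝ) (y : Phat P) :
    bfhat (bToggle x f) y =
      if y = toPhat x then bL f x * bR f x / f x else bfhat f y := by
  induction y using WithBot.recBotCoe with
  | bot => simp [bfhat, toPhat]
  | coe z =>
    induction z using WithTop.recTopCoe with
    | top =>
      have : ((⊤ : WithTop P) : Phat P) ≠ toPhat x := by simp [toPhat]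
      rw [if_neg this]
      rfl
    | coe w =>
      by_cases h : w = x
      · subst h
        simp [bfhat, toPhat, bToggle]
      · have h' : ((w : WithTop P) : Phat P) ≠ toPhat x := by
          simp [toPhat, h]
        simp [bfhat, bToggle, Function.update, h, h']

lemma sum_split (a : Phat P) [Fintype P] (G : Phat P → Phat P → ℝ)
    (hGa : G a a = 0) :
    ∑ w : Phat P, ∑ y : Phat P, G w y =
      (∑ w ∈ Finset.univ.erase a, G w a) +
      (∑ y ∈ Finset.univ.erase a, G a y) +
      ∑ w ∈ Finset.univ.erase a, ∑ y ∈ Finset.univ.erase a, G w y := by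
  rw [← Finset.add_sum_erase _ (fun w => ∑ y : Phat P, G w y) (Finset.mem_univ a)]
  rw [← Finset.add_sum_erase _ (fun y => G a y) (Finset.mem_univ a), hGa]
  have : ∀ w ∈ Finset.univ.erase a, ∑ y : Phat P, G w y =
      G w a + ∑ y ∈ Finset.univ.erase a, G w y := by
    intro w _
    rw [← Finset.add_sum_erase _ (fun y => G w y) (Finset.mem_univ a)]
  rw [Finset.sum_congr rfl this, Finset.sum_add_distrib]
  ring

theorem bToggle_preserves_coverRatioSum [Fintype P] (x : P) (f : P → ℝ)
    (hf : ∀ z, 0 < f z) :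
    coverRatioSum (bToggle x f) = coverRatioSum f := by
  classical
  set a : Phat P := toPhat x with ha
  set g : P → ℝ := bToggle x f with hg
  -- notation for the sums
  set S : ℝ := ∑ y ∈ Finset.univ.filter (fun y : Phat P => a ⋖ y), (bfhat f y)⁻¹
    with hS
  have hRS : bR f x = S⁻¹ := rfl
  -- positivity facts
  have hLpos : 0 < bL f x := by
    obtain ⟨w, hw⟩ : ∃ w : Phat P, w ⋖ a :=
      exists_covBy_of_wellFoundedGT (a := a)
        (WithBot.bot_lt_coe (x : WithTop P)).not_isMin
    refine Finset.sum_pos (fun i _ => bfhat_pos hf i) ⟨w, ?_⟩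
    simp [hw]
    exact hw
  have hSpos : 0 < S := by
    obtain ⟨y, hy⟩ : ∃ y : Phat P, a ⋖ y := by
      refine exists_covBy_of_wellFoundedLT (a := a) ?_
      have : a < (⊤ : Phat P) := by
        simpa [ha, toPhat] using
          (WithBot.coe_lt_coe.2 (WithTop.coe_lt_top x) :
            ((x : WithTop P) : Phat P) < ((⊤ : WithTop P) : Phat P))
      exact this.not_isMax
    refine Finset.sum_pos (fun i hi => ?_) ⟨y, ?_⟩
    · exact inv_pos.2 (bfhat_pos hf i)
    · simp [hy]
  have hfx : 0 < f x := hf x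
  have hgx : g x = bL f x * S⁻¹ / f x := by rw [hg, bToggle]; simp [hRS]
  -- rewrite coverRatioSum as a double sum
  have key : ∀ f' : P → ℝ, coverRatioSum f' =
      ∑ w : Phat P, ∑ y : Phat P,
        (if w ⋖ y then bfhat f' w / bfhat f' y else 0) := by
    intro f'
    rw [coverRatioSum, Finset.sum_filter, Fintype.sum_prod_type]
  rw [key g, key f]
  rw [sum_split a _ (if_neg (fun h : a ⋖ a => lt_irrefl a h.lt)),
    sum_split a _ (if_neg (fun h : a ⋖ a => lt_irrefl a h.lt))]
  -- the "far" terms coincide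
  have hfar : ∀ w ∈ Finset.univ.erase a, ∀ y ∈ Finset.univ.erase a,
      (if w ⋖ y then bfhat g w / bfhat g y else 0) =
      (if w ⋖ y then bfhat f w / bfhat f y else 0) := by
    intro w hw y hy
    rw [hg, bfhat_toggle, bfhat_toggle,
      if_neg (Finset.ne_of_mem_erase hw), if_neg (Finset.ne_of_mem_erase hy)]
  have hC : (∑ w ∈ Finset.univ.erase a, ∑ y ∈ Finset.univ.erase a,
      (if w ⋖ y then bfhat g w / bfhat g y else 0)) =
      ∑ w ∈ Finset.univ.erase a, ∑ y ∈ Finset.univ.erase a,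
      (if w ⋖ y then bfhat f w / bfhat f y else 0) :=
    Finset.sum_congr rfl fun w hw => Finset.sum_congr rfl fun y hy => hfar w hw y hy
  rw [hC]
  -- values at a
  have hga : bfhat g a = bL f x * S⁻¹ / f x := by
    rw [hg, bfhat_toggle, if_pos rfl, hRS]
  have hfa : bfhat f a = f x := bfhat_toPhat f x
  -- A (into a) and B (out of a) sums, for both functions
  have hAerase : ∀ h : P → ℝ, (∑ w ∈ Finset.univ.erase a,
      (if w ⋖ a then bfhat h w / bfhat h a else 0)) =
      ∑ w : Finset.univ.filter (fun w : Phat P => w ⋖ a),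
        bfhat h w / bfhat h a := by
    intro h
    rw [Finset.sum_erase (Finset.univ : Finset (Phat P))
        (f := fun w => if w ⋖ a then bfhat h w / bfhat h a else 0) (a := a)
        (if_neg (fun h : a ⋖ a => lt_irrefl a h.lt)),
      ← Finset.sum_filter, ← Finset.sum_coe_sort]
  have hBerase : ∀ h : P → ℝ, (∑ y ∈ Finset.univ.erase a,
      (if a ⋖ y then bfhat h a / bfhat h y else 0)) =
      ∑ y : Finset.univ.filter (fun y : Phat P => a ⋖ y),
        bfhat h a / bfhat h y := by
    intro h
    rw [Finset.sum_erase (Finset.univ : Finset (Phat P))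
        (f := fun y => if a ⋖ y then bfhat h a / bfhat h y else 0) (a := a)
        (if_neg (fun h : a ⋖ a => lt_irrefl a h.lt)),
      ← Finset.sum_filter, ← Finset.sum_coe_sort]
  -- evaluate the four sums
  have hmemA : ∀ w : Finset.univ.filter (fun w : Phat P => w ⋖ a),
      (w : Phat P) ≠ a := fun w => by
    have := w.2; simp only [Finset.mem_filter] at this
    exact this.2.ne
  have hmemB : ∀ y : Finset.univ.filter (fun y : Phat P => a ⋖ y),
      (y : Phat P) ≠ a := fun y => by
    have := y.2; simp only [Finset.mem_filter] at this
    exact this.2.ne'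
  have hgeq : ∀ y : Phat P, y ≠ a → bfhat g y = bfhat f y := by
    intro y hy; rw [hg, bfhat_toggle, if_neg hy]
  have hAg : (∑ w ∈ Finset.univ.erase a,
      (if w ⋖ a then bfhat g w / bfhat g a else 0)) = bL f x / bfhat g a := by
    rw [hAerase g, bL, ← Finset.sum_coe_sort
      (Finset.univ.filter (fun w : Phat P => w ⋖ a)) (bfhat f), ← Finset.sum_div]
    congr 1
    exact Finset.sum_congr rfl fun w _ => by rw [hgeq w (hmemA w)]
  have hAf : (∑ w ∈ Finset.univ.erase a,
      (if w ⋖ a then bfhat f w / bfhat f a else 0)) = bL f x / f x := by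
    rw [hAerase f, bL, ← Finset.sum_coe_sort
      (Finset.univ.filter (fun w : Phat P => w ⋖ a)) (bfhat f), ← Finset.sum_div,
      hfa]
  have hBg : (∑ y ∈ Finset.univ.erase a,
      (if a ⋖ y then bfhat g a / bfhat g y else 0)) = bfhat g a * S := by
    rw [hBerase g, hS, ← Finset.sum_coe_sort
      (Finset.univ.filter (fun y : Phat P => a ⋖ y))
      (fun y => (bfhat f y)⁻¹), Finset.mul_sum]
    exact Finset.sum_congr rfl fun y _ => by
      rw [hgeq y (hmemB y), div_eq_mul_inv]
  have hBf : (∑ y ∈ Finset.univ.erase a,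
      (if a ⋖ y then bfhat f a / bfhat f y else 0)) = f x * S := by
    rw [hBerase f, hS, ← Finset.sum_coe_sort
      (Finset.univ.filter (fun y : Phat P => a ⋖ y))
      (fun y => (bfhat f y)⁻¹), Finset.mul_sum, hfa]
    exact Finset.sum_congr rfl fun y _ => by rw [div_eq_mul_inv]
  rw [hAg, hAf, hBg, hBf, hga]
  -- now pure algebra
  have hL : bL f x ≠ 0 := hLpos.ne'
  have hS0 : S ≠ 0 := hSpos.ne'
  have hfx0 : f x ≠ 0 := hfx.ne'
  field_simp
  ring
end

section
/- If E₁ and E₂ are subtraction-free rational expressions in variables t₁,…,t_r built from the constant 1 and operations +, ∥ (parallel sum), ×, ÷, and E₁ = E₂ for all positive real inputs, then the tropicalizations e₁ and e₂ — obtained by replacing 1, +, ∥, ×, ÷ by 0, min, max, +, − respectively — satisfy e₁ = e₂ for all real inputs. -/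
/-- Subtraction-free rational expressions in `r` variables, built from the
constant 1 and the operations `+`, `∥` (parallel sum), `×`, `÷`. -/
inductive SFExpr (r : ℕ) : Type
  | var : Fin r → SFExpr r
  | one : SFExpr r
  | add : SFExpr r → SFExpr r → SFExpr r
  | par : SFExpr r → SFExpr r → SFExpr r
  | mul : SFExpr r → SFExpr r → SFExpr r
  | div : SFExpr r → SFExpr r → SFExpr r

/-- Evaluation of a subtraction-free expression at real inputs, with
`a ∥ b = ab/(a+b)`. -/
noncomputable def SFExpr.eval {r : ℕ} (t : Fin r → ℝ) : SFExpr r → ℝ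
  | var i => t i
  | one => 1
  | add a b => a.eval t + b.eval t
  | par a b => a.eval t * b.eval t / (a.eval t + b.eval t)
  | mul a b => a.eval t * b.eval t
  | div a b => a.eval t / b.eval t

/-- Tropicalization: replace `1, +, ∥, ×, ÷` by `0, min, max, +, −`. -/
noncomputable def SFExpr.trop {r : ℕ} (t : Fin r → ℝ) : SFExpr r → ℝ
  | var i => t i
  | one => 0
  | add a b => min (a.trop t) (b.trop t)
  | par a b => max (a.trop t) (b.trop t)
  | mul a b => a.trop t + b.trop t
  | div a b => a.trop t - b.trop t


lemma SFExpr.eval_pos {r : ℕ} (E : SFExpr r) :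
    ∀ t : Fin r → ℝ, (∀ i, 0 < t i) → 0 < E.eval t := by
  induction E with
  | var i => intro t ht; exact ht i
  | one => intro t ht; simp [SFExpr.eval]
  | add a b ha hb => intro t ht; simpa [SFExpr.eval] using add_pos (ha t ht) (hb t ht)
  | par a b ha hb =>
      intro t ht
      simpa [SFExpr.eval] using div_pos (mul_pos (ha t ht) (hb t ht)) (add_pos (ha t ht) (hb t ht))
  | mul a b ha hb => intro t ht; simpa [SFExpr.eval] using mul_pos (ha t ht) (hb t ht)
  | div a b ha hb => intro t ht; simpa [SFExpr.eval] using div_pos (ha t ht) (hb t ht)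

set_option maxHeartbeats 1000000 in
lemma SFExpr.bound {r : ℕ} (E : SFExpr r) :
    ∃ C : ℝ, 1 ≤ C ∧ ∀ (t : Fin r → ℝ) (N : ℝ), 0 ≤ N →
      Real.exp (-(N * E.trop t)) / C ≤ E.eval (fun i => Real.exp (-(N * t i))) ∧
      E.eval (fun i => Real.exp (-(N * t i))) ≤ C * Real.exp (-(N * E.trop t)) := by
  induction E with
  | var i =>
      exact ⟨1, le_refl 1, fun t N hN => by simp [SFExpr.eval, SFExpr.trop]⟩
  | one =>
      exact ⟨1, le_refl 1, fun t N hN => by simp [SFExpr.eval, SFExpr.trop]⟩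
  | add a b ha hb =>
      obtain ⟨Ca, hCa, Ha⟩ := ha
      obtain ⟨Cb, hCb, Hb⟩ := hb
      refine ⟨Ca + Cb, by linarith, fun t N hN => ?_⟩
      obtain ⟨la, ua⟩ := Ha t N hN
      obtain ⟨lb, ub⟩ := Hb t N hN
      simp only [SFExpr.eval, SFExpr.trop]
      have hea := Real.exp_pos (-(N * a.trop t))
      have heb := Real.exp_pos (-(N * b.trop t))
      have hCa0 : 0 < Ca := by linarith
      have hCb0 : 0 < Cb := by linarith
      rcases le_total (a.trop t) (b.trop t) with hc | hc
      · have hmin : min (a.trop t) (b.trop t) = a.trop t := min_eq_left hc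
        rw [hmin]
        have h1 : Real.exp (-(N * b.trop t)) ≤ Real.exp (-(N * a.trop t)) := by
          apply Real.exp_le_exp.mpr; nlinarith
        constructor
        · have : Real.exp (-(N * a.trop t)) / (Ca + Cb) ≤ Real.exp (-(N * a.trop t)) / Ca :=
            div_le_div_of_nonneg_left (le_of_lt hea) hCa0 (by linarith)
          have hbpos : 0 < b.eval (fun i => Real.exp (-(N * t i))) := by
            apply b.eval_pos; intro i; exact Real.exp_pos _
          linarith
        · nlinarith
      · have hmin : min (a.trop t) (b.trop t) = b.trop t := min_eq_right hc
        rw [hmin]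
        have h1 : Real.exp (-(N * a.trop t)) ≤ Real.exp (-(N * b.trop t)) := by
          apply Real.exp_le_exp.mpr; nlinarith
        constructor
        · have : Real.exp (-(N * b.trop t)) / (Ca + Cb) ≤ Real.exp (-(N * b.trop t)) / Cb :=
            div_le_div_of_nonneg_left (le_of_lt heb) hCb0 (by linarith)
          have hapos : 0 < a.eval (fun i => Real.exp (-(N * t i))) := by
            apply a.eval_pos; intro i; exact Real.exp_pos _
          linarith
        · nlinarith
  | par a b ha hb =>
      obtain ⟨Ca, hCa, Ha⟩ := ha
      obtain ⟨Cb, hCb, Hb⟩ := hb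
      refine ⟨2 * Ca * Cb, by nlinarith, fun t N hN => ?_⟩
      obtain ⟨la, ua⟩ := Ha t N hN
      obtain ⟨lb, ub⟩ := Hb t N hN
      simp only [SFExpr.eval, SFExpr.trop]
      set A := a.eval (fun i => Real.exp (-(N * t i))) with hA
      set B := b.eval (fun i => Real.exp (-(N * t i))) with hB
      have hApos : 0 < A := a.eval_pos _ (fun i => Real.exp_pos _)
      have hBpos : 0 < B := b.eval_pos _ (fun i => Real.exp_pos _)
      have hea := Real.exp_pos (-(N * a.trop t))
      have heb := Real.exp_pos (-(N * b.trop t))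
      have hCa0 : 0 < Ca := by linarith
      have hCb0 : 0 < Cb := by linarith
      rcases le_total (a.trop t) (b.trop t) with hc | hc
      · -- max = b.trop t
        have hmax : max (a.trop t) (b.trop t) = b.trop t := max_eq_right hc
        rw [hmax]
        have h1 : Real.exp (-(N * b.trop t)) ≤ Real.exp (-(N * a.trop t)) := by
          apply Real.exp_le_exp.mpr; nlinarith
        constructor
        · -- lower: A*B/(A+B) ≥ exp(-Nb)/(2 Ca Cb)
          rw [div_le_div_iff₀ (by positivity) (add_pos hApos hBpos)]
          -- exp(-Nb) * (A+B) ≤ A*B * (2 Ca Cb)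
          -- B ≥ exp(-Nb)/Cb, A ≥ exp(-Na)/Ca ≥ exp(-Nb)/Ca
          have hAlow : Real.exp (-(N * b.trop t)) / Ca ≤ A := by
            calc Real.exp (-(N * b.trop t)) / Ca ≤ Real.exp (-(N * a.trop t)) / Ca := by
                  apply div_le_div_of_nonneg_right h1 hCa0.le
            _ ≤ A := la
          have h2 : Real.exp (-(N * b.trop t)) ≤ Ca * A := by
            rw [div_le_iff₀ hCa0] at hAlow; linarith [hAlow]
          have h3 : Real.exp (-(N * b.trop t)) ≤ Cb * B := by
            rw [div_le_iff₀ hCb0] at lb; linarith [lb]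
          have k1 := mul_le_mul_of_nonneg_right h3 hApos.le
          have k2 := mul_le_mul_of_nonneg_right h2 hBpos.le
          have k3 : Ca + Cb ≤ 2 * Ca * Cb := by nlinarith
          have k4 := mul_le_mul_of_nonneg_right k3 (mul_pos hApos hBpos).le
          ring_nf at k1 k2 k4 ⊢
          linarith [k1, k2, k4]
        · -- upper: A*B/(A+B) ≤ B ≤ Cb exp(-Nb) ≤ 2 Ca Cb exp(-Nb)
          have h4 : A * B / (A + B) ≤ B := by
            rw [div_le_iff₀ (add_pos hApos hBpos)]; nlinarith
          nlinarith
      · have hmax : max (a.trop t) (b.trop t) = a.trop t := max_eq_left hc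
        rw [hmax]
        have h1 : Real.exp (-(N * a.trop t)) ≤ Real.exp (-(N * b.trop t)) := by
          apply Real.exp_le_exp.mpr; nlinarith
        constructor
        · rw [div_le_div_iff₀ (by positivity) (add_pos hApos hBpos)]
          have hBlow : Real.exp (-(N * a.trop t)) / Cb ≤ B := by
            calc Real.exp (-(N * a.trop t)) / Cb ≤ Real.exp (-(N * b.trop t)) / Cb := by
                  apply div_le_div_of_nonneg_right h1 hCb0.le
            _ ≤ B := lb
          have h2 : Real.exp (-(N * a.trop t)) ≤ Ca * A := by
            rw [div_le_iff₀ hCa0] at la; linarith [la]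
          have h3 : Real.exp (-(N * a.trop t)) ≤ Cb * B := by
            rw [div_le_iff₀ hCb0] at hBlow; linarith [hBlow]
          have k1 := mul_le_mul_of_nonneg_right h3 hApos.le
          have k2 := mul_le_mul_of_nonneg_right h2 hBpos.le
          have k3 : Ca + Cb ≤ 2 * Ca * Cb := by nlinarith
          have k4 := mul_le_mul_of_nonneg_right k3 (mul_pos hApos hBpos).le
          ring_nf at k1 k2 k4 ⊢
          linarith [k1, k2, k4]
        · have h4 : A * B / (A + B) ≤ A := by
            rw [div_le_iff₀ (add_pos hApos hBpos)]; nlinarith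
          nlinarith
  | mul a b ha hb =>
      obtain ⟨Ca, hCa, Ha⟩ := ha
      obtain ⟨Cb, hCb, Hb⟩ := hb
      refine ⟨Ca * Cb, by nlinarith, fun t N hN => ?_⟩
      obtain ⟨la, ua⟩ := Ha t N hN
      obtain ⟨lb, ub⟩ := Hb t N hN
      simp only [SFExpr.eval, SFExpr.trop]
      have hApos : 0 < a.eval (fun i => Real.exp (-(N * t i))) :=
        a.eval_pos _ (fun i => Real.exp_pos _)
      have hBpos : 0 < b.eval (fun i => Real.exp (-(N * t i))) :=
        b.eval_pos _ (fun i => Real.exp_pos _)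
      have hea := Real.exp_pos (-(N * a.trop t))
      have heb := Real.exp_pos (-(N * b.trop t))
      have hCa0 : 0 < Ca := by linarith
      have hCb0 : 0 < Cb := by linarith
      have hsplit : Real.exp (-(N * (a.trop t + b.trop t)))
          = Real.exp (-(N * a.trop t)) * Real.exp (-(N * b.trop t)) := by
        rw [← Real.exp_add]; ring_nf
      rw [hsplit]
      constructor
      · rw [div_le_iff₀ (by positivity)]
        have hla : Real.exp (-(N * a.trop t)) ≤ Ca * a.eval (fun i => Real.exp (-(N * t i))) := by
          rw [div_le_iff₀ hCa0] at la; linarith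
        have hlb : Real.exp (-(N * b.trop t)) ≤ Cb * b.eval (fun i => Real.exp (-(N * t i))) := by
          rw [div_le_iff₀ hCb0] at lb; linarith
        nlinarith
      · nlinarith
  | div a b ha hb =>
      obtain ⟨Ca, hCa, Ha⟩ := ha
      obtain ⟨Cb, hCb, Hb⟩ := hb
      refine ⟨Ca * Cb, by nlinarith, fun t N hN => ?_⟩
      obtain ⟨la, ua⟩ := Ha t N hN
      obtain ⟨lb, ub⟩ := Hb t N hN
      simp only [SFExpr.eval, SFExpr.trop]
      have hApos : 0 < a.eval (fun i => Real.exp (-(N * t i))) :=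
        a.eval_pos _ (fun i => Real.exp_pos _)
      have hBpos : 0 < b.eval (fun i => Real.exp (-(N * t i))) :=
        b.eval_pos _ (fun i => Real.exp_pos _)
      have hea := Real.exp_pos (-(N * a.trop t))
      have heb := Real.exp_pos (-(N * b.trop t))
      have hCa0 : 0 < Ca := by linarith
      have hCb0 : 0 < Cb := by linarith
      have hsplit : Real.exp (-(N * (a.trop t - b.trop t)))
          = Real.exp (-(N * a.trop t)) / Real.exp (-(N * b.trop t)) := by
        rw [← Real.exp_sub]; ring_nf
      rw [hsplit]
      have h2 : Real.exp (-(N * a.trop t)) ≤ Ca * a.eval (fun i => Real.exp (-(N * t i))) := by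
        rw [div_le_iff₀ hCa0] at la; linarith
      have hlb : Real.exp (-(N * b.trop t)) ≤ Cb * b.eval (fun i => Real.exp (-(N * t i))) := by
        rw [div_le_iff₀ hCb0] at lb; linarith
      constructor
      · rw [div_div, div_le_div_iff₀ (by positivity) hBpos]
        have key := mul_le_mul h2 ub hBpos.le (by positivity :
          (0:ℝ) ≤ Ca * a.eval (fun i => Real.exp (-(N * t i))))
        nlinarith [key]
      · rw [mul_div_assoc', div_le_div_iff₀ hBpos heb]
        have key := mul_le_mul ua hlb heb.le (by positivity :
          (0:ℝ) ≤ Ca * Real.exp (-(N * a.trop t)))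
        nlinarith [key]

theorem tropicalization_of_identity {r : ℕ} (E₁ E₂ : SFExpr r)
    (h : ∀ t : Fin r → ℝ, (∀ i, 0 < t i) → E₁.eval t = E₂.eval t) :
    ∀ t : Fin r → ℝ, E₁.trop t = E₂.trop t := by
  intro t
  obtain ⟨C₁, hC₁, H₁⟩ := E₁.bound
  obtain ⟨C₂, hC₂, H₂⟩ := E₂.bound
  have key : ∀ d : ℝ, (∀ N : ℝ, 0 ≤ N → N * d ≤ Real.log (C₁ * C₂)) → d ≤ 0 := by
    intro d hd
    by_contra hdpos
    push_neg at hdpos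
    have h0 : 0 ≤ Real.log (C₁ * C₂) := by simpa using hd 0 le_rfl
    have hN := hd ((Real.log (C₁ * C₂) + 1) / d) (by positivity)
    rw [div_mul_cancel₀ _ (ne_of_gt hdpos)] at hN
    linarith
  have main : ∀ (F G : SFExpr r) (CF CG : ℝ), 1 ≤ CF → 1 ≤ CG →
      (∀ (N : ℝ), 0 ≤ N →
        Real.exp (-(N * F.trop t)) / CF ≤ F.eval (fun i => Real.exp (-(N * t i))) ∧
        F.eval (fun i => Real.exp (-(N * t i))) ≤ CF * Real.exp (-(N * F.trop t))) →
      (∀ (N : ℝ), 0 ≤ N →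
        Real.exp (-(N * G.trop t)) / CG ≤ G.eval (fun i => Real.exp (-(N * t i))) ∧
        G.eval (fun i => Real.exp (-(N * t i))) ≤ CG * Real.exp (-(N * G.trop t))) →
      (∀ N : ℝ, 0 ≤ N → F.eval (fun i => Real.exp (-(N * t i))) = G.eval (fun i => Real.exp (-(N * t i)))) →
      ∀ N : ℝ, 0 ≤ N → N * (G.trop t - F.trop t) ≤ Real.log (CF * CG) := by
    intro F G CF CG hCF hCG HF HG heq N hN
    obtain ⟨lF, _⟩ := HF N hN
    obtain ⟨_, uG⟩ := HG N hN
    have hCF0 : 0 < CF := by linarith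
    have hCG0 : 0 < CG := by linarith
    have heF := Real.exp_pos (-(N * F.trop t))
    have heG := Real.exp_pos (-(N * G.trop t))
    have h1 : Real.exp (-(N * F.trop t)) / CF ≤ CG * Real.exp (-(N * G.trop t)) := by
      calc Real.exp (-(N * F.trop t)) / CF ≤ F.eval (fun i => Real.exp (-(N * t i))) := lF
      _ = G.eval (fun i => Real.exp (-(N * t i))) := heq N hN
      _ ≤ CG * Real.exp (-(N * G.trop t)) := uG
    have h2 : Real.exp (-(N * F.trop t)) ≤ CF * CG * Real.exp (-(N * G.trop t)) := by
      rw [div_le_iff₀ hCF0] at h1; nlinarith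
    have h3 : Real.exp (N * (G.trop t - F.trop t)) ≤ CF * CG := by
      rw [show N * (G.trop t - F.trop t) = -(N * F.trop t) - -(N * G.trop t) by ring,
        Real.exp_sub, div_le_iff₀ heG]
      exact h2
    calc N * (G.trop t - F.trop t) = Real.log (Real.exp (N * (G.trop t - F.trop t))) :=
        (Real.log_exp _).symm
    _ ≤ Real.log (CF * CG) := Real.log_le_log (Real.exp_pos _) h3
  have heq12 : ∀ N : ℝ, 0 ≤ N →
      E₁.eval (fun i => Real.exp (-(N * t i))) = E₂.eval (fun i => Real.exp (-(N * t i))) := by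
    intro N hN
    exact h _ (fun i => Real.exp_pos _)
  have d1 : E₂.trop t - E₁.trop t ≤ 0 := by
    apply key
    intro N hN
    exact main E₁ E₂ C₁ C₂ hC₁ hC₂ (H₁ t) (H₂ t) heq12 N hN
  have d2 : E₁.trop t - E₂.trop t ≤ 0 := by
    apply key
    intro N hN
    have := main E₂ E₁ C₂ C₁ hC₂ hC₁ (H₂ t) (H₁ t) (fun N hN => (heq12 N hN).symm) N hN
    rwa [mul_comm C₂ C₁] at this
  linarith
end
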